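/- Let Δ be a compact Hausdorff space, u : Δ → ℝ continuous, v : Δ → ℝ upper semicontinuous; set f(α) = max{v(w) : w ∈ Δ, u(w) = α} (with value −∞ if no such w exists) and τ(q) = min_{w∈Δ}(q·u(w) − v(w)). Then: (a) f(α) ≤ τ*(α) for all α ∈ ℝ; (b) if τ is supported at (q,α) for some q ∈ ℝ, then f(α) = qα − τ(q) = τ*(α); (c) the following are equivalent: (i) for all q ∈ ℝ and all α ∈ ∂τ(q), τ is supported at (q,α); (ii) f(α) = τ*(α) for all α ∈ ℝ; (iii) f is concave. -/

import Mathlib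

open Filter Set Topology

set_option linter.unusedSectionVars false
set_option linter.unusedVariables false
set_option maxHeartbeats 1000000

noncomputable section

variable {Δ : Type*} [TopologicalSpace Δ]

/-- The unconstrained dual `τ(q) = min_{w∈Δ} (q·u(w) − v(w))`. -/
def tauOpt (u v : Δ → ℝ) (q : ℝ) : ℝ :=
  sInf (Set.range fun w => q * u w - v w)

/-- The constrained optimum `f(α) = max{v(w) : u(w) = α}`, valued in `EReal`
(with value `−∞ = ⊥` if the constraint set is empty). -/
def fOpt (u v : Δ → ℝ) (α : ℝ) : EReal :=
  sSup ((fun w => ((v w : ℝ) : EReal)) '' {w | u w = α})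

/-- The concave conjugate `g*(α) = inf_{q∈ℝ} (qα − g(q))`, valued in `EReal`. -/
def concConj (g : ℝ → ℝ) (α : ℝ) : EReal :=
  ⨅ q : ℝ, ((q * α - g q : ℝ) : EReal)

/-- `τ` is supported at `(q, α)`: there is `w ∈ Δ` with `u(w) = α` and
`τ(q) = q·u(w) − v(w)`. -/
def SupportedAt (u v : Δ → ℝ) (q α : ℝ) : Prop :=
  ∃ w : Δ, u w = α ∧ tauOpt u v q = q * u w - v w

/-- `α` belongs to the subdifferential `∂τ(q)` of the concave function `τ` at `q`,
i.e. the line through `(q, τ(q))` with slope `α` lies above the graph of `τ`. -/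
def InSubdiff (τ : ℝ → ℝ) (q α : ℝ) : Prop :=
  ∀ y : ℝ, τ y ≤ τ q + α * (y - q)


/-- usc function on a nonempty compact set attains its max. -/
lemma usc_exists_max {S : Set Δ} (hS : IsCompact S) (hne : S.Nonempty) {f : Δ → ℝ}
    (hf : UpperSemicontinuous f) : ∃ w ∈ S, ∀ x ∈ S, f x ≤ f w := by
  by_contra h
  push_neg at h
  have hcov : S ⊆ ⋃ y : S, f ⁻¹' (Iio (f y)) := by
    intro w hw
    obtain ⟨x, hx, hlt⟩ := h w hw
    exact mem_iUnion.2 ⟨⟨x, hx⟩, hlt⟩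
  obtain ⟨T, hT⟩ := hS.elim_finite_subcover (fun y : S => f ⁻¹' (Iio (f y)))
    (fun y => hf.isOpen_preimage _) hcov
  obtain ⟨w0, hw0⟩ := hne
  have hTne : T.Nonempty := by
    rcases mem_iUnion₂.1 (hT hw0) with ⟨y, hy, _⟩
    exact ⟨y, hy⟩
  obtain ⟨ym, hymT, hymax⟩ := T.exists_max_image (fun y : S => f y) hTne
  rcases mem_iUnion₂.1 (hT ym.2) with ⟨y, hyT, hlt⟩
  exact absurd (hymax y hyT) (not_le.2 hlt)

/-- lsc function on a nonempty compact set attains its min. -/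
lemma lsc_exists_min {S : Set Δ} (hS : IsCompact S) (hne : S.Nonempty) {f : Δ → ℝ}
    (hf : LowerSemicontinuous f) : ∃ w ∈ S, ∀ x ∈ S, f w ≤ f x := by
  have hneg : UpperSemicontinuous (fun w => -(f w)) := by
    intro x y hy
    simp only at hy ⊢
    filter_upwards [hf x (-y) (by linarith)] with z hz
    linarith
  obtain ⟨w, hwS, hw⟩ := usc_exists_max hS hne hneg
  exact ⟨w, hwS, fun x hx => by have := hw x hx; linarith⟩

section Main
variable [CompactSpace Δ] [Nonempty Δ] {u v : Δ → ℝ}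

lemma lsc_obj (hu : Continuous u) (hv : UpperSemicontinuous v) (q : ℝ) :
    LowerSemicontinuous (fun w => q * u w - v w) := by
  intro x y hy
  simp only at hy ⊢
  set ε := (q * u x - v x - y) / 2 with hε
  have hεpos : 0 < ε := by linarith
  have h1 : ∀ᶠ z in 𝓝 x, q * u x - ε < q * u z := by
    have : Tendsto (fun z => q * u z) (𝓝 x) (𝓝 (q * u x)) :=
      ((continuous_const.mul hu).tendsto x)
    exact this.eventually (eventually_gt_nhds (by linarith))
  have h2 : ∀ᶠ z in 𝓝 x, v z < v x + ε := hv x (v x + ε) (by linarith)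
  filter_upwards [h1, h2] with z h1z h2z
  linarith

lemma exists_tau_min (hu : Continuous u) (hv : UpperSemicontinuous v) (q : ℝ) :
    ∃ w : Δ, (∀ x, q * u w - v w ≤ q * u x - v x) ∧ tauOpt u v q = q * u w - v w := by
  obtain ⟨w, _, hw⟩ := lsc_exists_min isCompact_univ univ_nonempty (lsc_obj hu hv q)
  have hmin : ∀ x, q * u w - v w ≤ q * u x - v x := fun x => hw x (mem_univ x)
  have hbdd : BddBelow (Set.range fun x => q * u x - v x) :=
    ⟨q * u w - v w, by rintro r ⟨x, rfl⟩; exact hmin x⟩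
  refine ⟨w, hmin, le_antisymm (csInf_le hbdd ⟨w, rfl⟩) ?_⟩
  refine le_csInf (range_nonempty _) ?_
  rintro r ⟨x, rfl⟩
  exact hmin x

lemma tauOpt_le (hu : Continuous u) (hv : UpperSemicontinuous v) (q : ℝ) (w : Δ) :
    tauOpt u v q ≤ q * u w - v w := by
  obtain ⟨w0, hmin, heq⟩ := exists_tau_min hu hv q
  exact heq ▸ hmin w

/-- the slope `u w` of a minimizer at `q` is a supergradient of `τ` at `q`. -/
lemma tau_supergrad (hu : Continuous u) (hv : UpperSemicontinuous v) {q : ℝ} {w : Δ}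
    (hmin : tauOpt u v q = q * u w - v w) :
    InSubdiff (tauOpt u v) q (u w) := by
  intro y
  have := tauOpt_le hu hv y w
  have : tauOpt u v y ≤ y * u w - v w := this
  nlinarith [this, hmin]



lemma part_a (hu : Continuous u) (hv : UpperSemicontinuous v) (α : ℝ) :
    fOpt u v α ≤ concConj (tauOpt u v) α := by
  refine sSup_le ?_
  rintro x ⟨w, hw, rfl⟩
  refine le_iInf fun q => ?_
  rw [EReal.coe_le_coe_iff]
  have := tauOpt_le hu hv q w
  rw [show u w = α from hw] at this
  linarith

lemma part_b (hu : Continuous u) (hv : UpperSemicontinuous v) {q α : ℝ}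
    (h : SupportedAt u v q α) :
    fOpt u v α = ((q * α - tauOpt u v q : ℝ) : EReal) ∧
      fOpt u v α = concConj (tauOpt u v) α := by
  obtain ⟨w, hwα, heq⟩ := h
  have hvw : v w = q * α - tauOpt u v q := by rw [heq, hwα]; ring
  have h1 : ((q * α - tauOpt u v q : ℝ) : EReal) ≤ fOpt u v α := by
    rw [← hvw]; exact le_sSup ⟨w, hwα, rfl⟩
  have h2 : concConj (tauOpt u v) α ≤ ((q * α - tauOpt u v q : ℝ) : EReal) := iInf_le _ q
  have h3 := part_a hu hv α
  exact ⟨le_antisymm (h3.trans h2) h1, le_antisymm h3 (h2.trans h1)⟩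

lemma endpoint_eq (hu : Continuous u) (hv : UpperSemicontinuous v) {wm : Δ}
    (hm : ∀ x, u wm ≤ u x) : fOpt u v (u wm) = concConj (tauOpt u v) (u wm) := by
  set m := u wm with hmdef
  refine le_antisymm (part_a hu hv m) ?_
  by_contra hcon
  replace hcon : fOpt u v m < concConj (tauOpt u v) m := not_le.1 hcon
  obtain ⟨c, hc1, hc2⟩ := EReal.lt_iff_exists_real_btwn.1 hcon
  have hcq : ∀ q : ℝ, c < q * m - tauOpt u v q := fun q =>
    EReal.coe_lt_coe_iff.1 (hc2.trans_le (iInf_le _ q))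
  obtain ⟨wV, _, hV⟩ := usc_exists_max isCompact_univ univ_nonempty hv
  set V := v wV with hVdef
  have hVle : ∀ x, v x ≤ V := fun x => hV x (mem_univ x)
  -- choose minimizers at q = n
  have hsel : ∀ n : ℕ, ∃ w : Δ, (n : ℝ) * u w - v w = tauOpt u v n := by
    intro n
    obtain ⟨w, _, hw⟩ := exists_tau_min hu hv (n : ℝ)
    exact ⟨w, hw.symm⟩
  choose g hg using hsel
  have hvge : ∀ n : ℕ, c ≤ v (g n) := by
    intro n
    have h1 := hcq (n : ℝ)
    have h2 : (0:ℝ) ≤ (n : ℝ) * (u (g n) - m) :=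
      mul_nonneg (Nat.cast_nonneg n) (by have := hm (g n); linarith)
    nlinarith [hg n]
  have hub : ∀ n : ℕ, (n : ℝ) * (u (g n) - m) ≤ V - c := by
    intro n
    have h1 := hcq (n : ℝ)
    have h2 := hVle (g n)
    nlinarith [hg n]
  have htend : Tendsto (fun n => u (g n)) atTop (𝓝 m) := by
    have hupper : ∀ᶠ n : ℕ in atTop, u (g n) ≤ m + (V - c) / n := by
      filter_upwards [eventually_ge_atTop 1] with n hn
      have hnpos : (0:ℝ) < (n:ℝ) := by exact_mod_cast hn
      have := hub n
      have h3 : u (g n) - m ≤ (V - c) / n := by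
        rw [le_div_iff₀ hnpos]; nlinarith
      linarith
    have hlower : ∀ᶠ n : ℕ in atTop, m ≤ u (g n) := Eventually.of_forall fun n => hm (g n)
    have htop : Tendsto (fun n : ℕ => m + (V - c) / n) atTop (𝓝 (m + 0)) :=
      tendsto_const_nhds.add (tendsto_const_nhds.div_atTop tendsto_natCast_atTop_atTop)
    rw [add_zero] at htop
    exact tendsto_of_tendsto_of_tendsto_of_le_of_le' tendsto_const_nhds htop hlower hupper
  set F := Ultrafilter.of (Filter.map g atTop) with hFdef
  have hFle : (F : Filter Δ) ≤ Filter.map g atTop := Ultrafilter.of_le _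
  obtain ⟨wb, _, hwb⟩ := isCompact_univ.ultrafilter_le_nhds F (by simp)
  have t1 : Tendsto u (F : Filter Δ) (𝓝 (u wb)) := (hu.tendsto wb).mono_left hwb
  have t2 : Tendsto u (F : Filter Δ) (𝓝 m) :=
    (tendsto_map'_iff.2 htend).mono_left hFle
  have hum : u wb = m := tendsto_nhds_unique t1 t2
  have hvwb : c ≤ v wb := by
    by_contra hlt
    have hev : ∀ᶠ z in 𝓝 wb, v z < c := hv wb c (not_le.1 hlt)
    have hev2 : ∀ᶠ z in (F : Filter Δ), v z < c := hwb hev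
    have hev3 : ∀ᶠ z in (F : Filter Δ), c ≤ v z := by
      apply hFle
      rw [mem_map]
      exact Eventually.of_forall fun n => hvge n
    obtain ⟨x, hx1, hx2⟩ := (hev2.and hev3).exists
    linarith
  have : (c : EReal) ≤ fOpt u v m := by
    calc (c : EReal) ≤ ((v wb : ℝ) : EReal) := EReal.coe_le_coe_iff.2 hvwb
    _ ≤ fOpt u v m := le_sSup ⟨wb, hum, rfl⟩
  exact absurd (hc1.trans_le this) (lt_irrefl _)

lemma tauOpt_neg (q : ℝ) : tauOpt (fun w => -u w) v q = tauOpt u v (-q) := by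
  have hfg : (fun w : Δ => q * -u w - v w) = fun w => -q * u w - v w :=
    funext fun w => by ring
  simp only [tauOpt, hfg]

lemma fOpt_neg (α : ℝ) : fOpt (fun w => -u w) v (-α) = fOpt u v α := by
  simp only [fOpt, neg_inj]

lemma concConj_neg (α : ℝ) :
    concConj (tauOpt (fun w => -u w) v) (-α) = concConj (tauOpt u v) α := by
  refine le_antisymm ?_ ?_
  · refine le_iInf fun q => iInf_le_of_le (-q) (le_of_eq ?_)
    rw [tauOpt_neg, neg_neg]
    exact congrArg (fun r : ℝ => (r : EReal)) (by ring)
  · refine le_iInf fun q => iInf_le_of_le (-q) (le_of_eq ?_)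
    rw [tauOpt_neg]
    exact congrArg (fun r : ℝ => (r : EReal)) (by ring)

lemma tau_lb (hu : Continuous u) (hv : UpperSemicontinuous v) {wm wV : Δ}
    (hm : ∀ x, u wm ≤ u x) (hV : ∀ x, v x ≤ v wV) {q : ℝ} (hq : 0 ≤ q) :
    q * u wm - v wV ≤ tauOpt u v q := by
  refine le_csInf (range_nonempty _) ?_
  rintro r ⟨w, rfl⟩
  have := mul_le_mul_of_nonneg_left (hm w) hq
  have := hV w
  simp only
  linarith

lemma below_eq (hu : Continuous u) (hv : UpperSemicontinuous v) {wm : Δ}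
    (hm : ∀ x, u wm ≤ u x) {α : ℝ} (hα : α < u wm) :
    fOpt u v α = ⊥ ∧ concConj (tauOpt u v) α = ⊥ := by
  set m := u wm with hmdef
  obtain ⟨wV, _, hVm⟩ := usc_exists_max isCompact_univ univ_nonempty hv
  have hV : ∀ x, v x ≤ v wV := fun x => hVm x (mem_univ x)
  set V := v wV with hVdef
  constructor
  · have : {w : Δ | u w = α} = ∅ := by
      refine eq_empty_iff_forall_notMem.2 fun w hw => ?_
      have := hm w
      simp only [mem_setOf_eq] at hw
      linarith
    simp [fOpt, this]
  · rw [concConj, iInf_eq_bot]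
    intro b hb
    rcases eq_or_ne b ⊤ with rfl | hbtop
    · exact ⟨0, (EReal.coe_lt_top _)⟩
    · lift b to ℝ using ⟨hbtop, hb.ne'⟩
      set q := max 0 ((V - b + 1)/(m - α)) with hqdef
      have hq0 : 0 ≤ q := le_max_left _ _
      have hmα : 0 < m - α := by linarith
      have hq2 : V - b + 1 ≤ q * (m - α) := by
        have : (V - b + 1)/(m - α) ≤ q := le_max_right _ _
        calc V - b + 1 = ((V - b + 1)/(m - α)) * (m - α) := by field_simp
        _ ≤ q * (m - α) := by apply mul_le_mul_of_nonneg_right this hmα.le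
      refine ⟨q, ?_⟩
      rw [EReal.coe_lt_coe_iff]
      have := tau_lb hu hv hm hV hq0
      nlinarith

lemma not_interior_eq (hu : Continuous u) (hv : UpperSemicontinuous v) {wm wM : Δ}
    (hm : ∀ x, u wm ≤ u x) (hM : ∀ x, u x ≤ u wM) {α : ℝ}
    (hα : α ≤ u wm ∨ u wM ≤ α) :
    fOpt u v α = concConj (tauOpt u v) α := by
  rcases hα with hα | hα
  · rcases eq_or_lt_of_le hα with rfl | hlt
    · exact endpoint_eq hu hv hm
    · obtain ⟨h1, h2⟩ := below_eq hu hv hm hlt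
      rw [h1, h2]
  · have hm' : ∀ x, -u wM ≤ -u x := fun x => neg_le_neg (hM x)
    have h1 : fOpt (fun w => -u w) v (-α) = concConj (tauOpt (fun w => -u w) v) (-α) := by
      rcases eq_or_lt_of_le hα with rfl | hlt
      · exact endpoint_eq hu.neg hv hm'
      · obtain ⟨h1, h2⟩ := below_eq hu.neg hv hm' (neg_lt_neg hlt)
        exact h1.trans h2.symm
    rwa [fOpt_neg, concConj_neg] at h1

lemma tau_continuous (hu : Continuous u) (hv : UpperSemicontinuous v) {wm wM : Δ}
    (hm : ∀ x, u wm ≤ u x) (hM : ∀ x, u x ≤ u wM) :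
    Continuous (tauOpt u v) := by
  set C := max |u wm| |u wM| with hC
  have hCb : ∀ w, |u w| ≤ C := by
    intro w
    rw [abs_le]
    constructor
    · have h1 := hm w
      have : -|u wm| ≤ u wm := neg_abs_le _
      have : |u wm| ≤ C := le_max_left _ _
      linarith
    · have h1 := hM w
      have : u wM ≤ |u wM| := le_abs_self _
      have : |u wM| ≤ C := le_max_right _ _
      linarith
  have key : ∀ q q' : ℝ, tauOpt u v q' ≤ tauOpt u v q + C * |q' - q| := by
    intro q q'
    obtain ⟨w, _, hw⟩ := exists_tau_min hu hv q
    have h1 : tauOpt u v q' ≤ q' * u w - v w := tauOpt_le hu hv q' w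
    have h2 : (q' - q) * u w ≤ C * |q' - q| := by
      calc (q' - q) * u w ≤ |(q' - q) * u w| := le_abs_self _
      _ = |q' - q| * |u w| := abs_mul _ _
      _ ≤ |q' - q| * C := mul_le_mul_of_nonneg_left (hCb w) (abs_nonneg _)
      _ = C * |q' - q| := mul_comm _ _
    nlinarith [hw]
  rw [Metric.continuous_iff]
  intro q ε hε
  have hC0 : 0 ≤ C := le_trans (abs_nonneg _) (le_max_left _ _)
  refine ⟨ε / (C + 1), by positivity, fun q' hq' => ?_⟩
  rw [Real.dist_eq] at hq' ⊢
  have k1 := key q q'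
  have k2 := key q' q
  have habs : |q - q'| = |q' - q| := abs_sub_comm _ _
  rw [abs_lt]
  have hb : C * |q' - q| < ε := by
    have h1 : |q' - q| < ε / (C + 1) := hq'
    have : C * |q' - q| ≤ (C + 1) * |q' - q| := by nlinarith [abs_nonneg (q' - q)]
    have : (C + 1) * |q' - q| < (C + 1) * (ε / (C + 1)) := by
      apply mul_lt_mul_of_pos_left h1 (by positivity)
    have heq : (C + 1) * (ε / (C + 1)) = ε := by field_simp
    linarith
  rw [habs] at k2
  constructor <;> linarith

lemma exists_subdiff (hu : Continuous u) (hv : UpperSemicontinuous v) {wm wM : Δ}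
    (hm : ∀ x, u wm ≤ u x) (hM : ∀ x, u x ≤ u wM) {α : ℝ}
    (h1 : u wm < α) (h2 : α < u wM) :
    ∃ q : ℝ, InSubdiff (tauOpt u v) q α := by
  set m := u wm
  set M := u wM
  set h : ℝ → ℝ := fun y => y * α - tauOpt u v y with hh
  have hcont : Continuous h :=
    (continuous_id.mul continuous_const).sub (tau_continuous hu hv hm hM)
  have hlb1 : ∀ y : ℝ, y * (α - m) + v wm ≤ h y := by
    intro y
    have := tauOpt_le hu hv y wm
    simp only [hh]
    nlinarith
  have hlb2 : ∀ y : ℝ, y * (α - M) + v wM ≤ h y := by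
    intro y
    have := tauOpt_le hu hv y wM
    simp only [hh]
    nlinarith
  set R := max 1 (max ((h 0 - v wm)/(α - m)) (-((h 0 - v wM)/(α - M)))) with hR
  have hR1 : (1:ℝ) ≤ R := le_max_left _ _
  have hRm : (h 0 - v wm)/(α - m) ≤ R := le_trans (le_max_left _ _) (le_max_right _ _)
  have hRM : -((h 0 - v wM)/(α - M)) ≤ R := le_trans (le_max_right _ _) (le_max_right _ _)
  obtain ⟨q0, hq0mem, hq0min⟩ := isCompact_Icc.exists_isMinOn
    (nonempty_Icc.2 (by linarith)) hcont.continuousOn (s := Icc (-R) R)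
  have hglob : ∀ y : ℝ, h q0 ≤ h y := by
    intro y
    rcases le_or_gt y R with hy1 | hy1
    · rcases le_or_gt (-R) y with hy2 | hy2
      · exact hq0min ⟨hy2, hy1⟩
      · -- y < -R : use hlb2
        have h0 : h q0 ≤ h 0 := hq0min ⟨by linarith, by linarith⟩
        have hαM : α - M < 0 := by linarith
        have : h 0 - v wM ≤ y * (α - M) := by
          have hy3 : y ≤ (h 0 - v wM)/(α - M) := by linarith
          have := mul_le_mul_of_nonpos_right hy3 hαM.le
          rwa [div_mul_cancel₀ _ hαM.ne] at this
        have := hlb2 y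
        linarith
    · -- y > R : use hlb1
      have h0 : h q0 ≤ h 0 := hq0min ⟨by linarith, by linarith⟩
      have hαm : 0 < α - m := by linarith
      have : h 0 - v wm ≤ y * (α - m) := by
        have hy3 : (h 0 - v wm)/(α - m) ≤ y := by linarith
        have := mul_le_mul_of_nonneg_right hy3 hαm.le
        rwa [div_mul_cancel₀ _ hαm.ne'] at this
      have := hlb1 y
      linarith
  refine ⟨q0, fun y => ?_⟩
  have := hglob y
  simp only [hh] at this
  nlinarith

lemma subdiff_supported (hu : Continuous u) (hv : UpperSemicontinuous v)
    (hf : ∀ β : ℝ, fOpt u v β = concConj (tauOpt u v) β) (q α : ℝ)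
    (hsub : InSubdiff (tauOpt u v) q α) : SupportedAt u v q α := by
  set r := q * α - tauOpt u v q with hr
  have hconj : concConj (tauOpt u v) α = ((r : ℝ) : EReal) := by
    refine le_antisymm (iInf_le _ q) (le_iInf fun y => ?_)
    rw [EReal.coe_le_coe_iff]
    have := hsub y
    nlinarith
  have hfα : fOpt u v α = ((r : ℝ) : EReal) := (hf α).trans hconj
  have hSne : {w : Δ | u w = α}.Nonempty := by
    by_contra hS
    rw [not_nonempty_iff_eq_empty] at hS
    rw [fOpt, hS] at hfα
    simp at hfα
  have hScpt : IsCompact {w : Δ | u w = α} :=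
    (isClosed_singleton.preimage hu).isCompact
  obtain ⟨w, hwS, hwmax⟩ := usc_exists_max hScpt hSne hv
  have hfw : fOpt u v α = ((v w : ℝ) : EReal) := by
    refine le_antisymm (sSup_le ?_) (le_sSup ⟨w, hwS, rfl⟩)
    rintro x ⟨y, hy, rfl⟩
    exact EReal.coe_le_coe_iff.2 (hwmax y hy)
  have hvw : v w = r := by
    have := hfw.symm.trans hfα
    exact_mod_cast this
  exact ⟨w, hwS, by rw [show u w = α from hwS, hvw, hr]; ring⟩

lemma concConj_ne_top (α : ℝ) : concConj (tauOpt u v) α ≠ ⊤ := by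
  intro h
  have h1 : concConj (tauOpt u v) α ≤ ((0 * α - tauOpt u v 0 : ℝ) : EReal) := iInf_le _ 0
  rw [h, top_le_iff] at h1
  exact EReal.coe_ne_top _ h1

lemma concConj_concave (a b t : ℝ) (ht : t ∈ Set.Ioo (0:ℝ) 1) :
    ((t : ℝ) : EReal) * concConj (tauOpt u v) a
      + ((1 - t : ℝ) : EReal) * concConj (tauOpt u v) b
      ≤ concConj (tauOpt u v) (t * a + (1 - t) * b) := by
  obtain ⟨ht0, ht1⟩ := ht
  rcases eq_or_ne (concConj (tauOpt u v) a) ⊥ with ha | ha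
  · rw [ha, EReal.coe_mul_bot_of_pos ht0, EReal.bot_add]
    exact bot_le
  rcases eq_or_ne (concConj (tauOpt u v) b) ⊥ with hb | hb
  · rw [hb, EReal.coe_mul_bot_of_pos (by linarith), EReal.add_bot]
    exact bot_le
  lift concConj (tauOpt u v) a to ℝ using ⟨concConj_ne_top a, ha⟩ with ra hra
  lift concConj (tauOpt u v) b to ℝ using ⟨concConj_ne_top b, hb⟩ with rb hrb
  have hqa : ∀ q : ℝ, ra ≤ q * a - tauOpt u v q := fun q =>
    EReal.coe_le_coe_iff.1 (hra ▸ iInf_le _ q)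
  have hqb : ∀ q : ℝ, rb ≤ q * b - tauOpt u v q := fun q =>
    EReal.coe_le_coe_iff.1 (hrb ▸ iInf_le _ q)
  rw [← EReal.coe_mul, ← EReal.coe_mul, ← EReal.coe_add]
  refine le_iInf fun q => ?_
  rw [EReal.coe_le_coe_iff]
  nlinarith [hqa q, hqb q]

lemma fOpt_le_V {wV : Δ} (hV : ∀ x, v x ≤ v wV) (β : ℝ) :
    fOpt u v β ≤ ((v wV : ℝ) : EReal) := by
  refine sSup_le ?_
  rintro x ⟨w, _, rfl⟩
  exact EReal.coe_le_coe_iff.2 (hV w)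

lemma concave_interior_eq (hu : Continuous u) (hv : UpperSemicontinuous v) {wm wM : Δ}
    (hm : ∀ x, u wm ≤ u x) (hM : ∀ x, u x ≤ u wM)
    (hconc : ∀ a b t : ℝ, t ∈ Set.Ioo (0:ℝ) 1 →
      ((t : ℝ) : EReal) * fOpt u v a + ((1 - t : ℝ) : EReal) * fOpt u v b
        ≤ fOpt u v (t * a + (1 - t) * b))
    {α : ℝ} (h1 : u wm < α) (h2 : α < u wM) :
    fOpt u v α = concConj (tauOpt u v) α := by
  set m := u wm with hmdef
  set M := u wM with hMdef
  have hmM : m < M := h1.trans h2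
  obtain ⟨wV, _, hVm⟩ := usc_exists_max isCompact_univ univ_nonempty hv
  have hV : ∀ x, v x ≤ v wV := fun x => hVm x (mem_univ x)
  -- fOpt is real-valued on [m, M]
  have hreal : ∀ β ∈ Icc m M, ∃ r : ℝ, fOpt u v β = ((r : ℝ) : EReal) := by
    intro β hβ
    have htop : fOpt u v β ≠ ⊤ :=
      fun h => EReal.coe_ne_top (v wV) (top_le_iff.1 (h ▸ fOpt_le_V hV β))
    have hbot : fOpt u v β ≠ ⊥ := by
      rcases eq_or_lt_of_le hβ.1 with heq | hβ1
      · intro h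
        have hmem : wm ∈ {w : Δ | u w = β} := heq
        have : ((v wm : ℝ) : EReal) ≤ fOpt u v β := le_sSup ⟨wm, hmem, rfl⟩
        rw [h, le_bot_iff] at this
        exact EReal.coe_ne_bot _ this
      rcases eq_or_lt_of_le hβ.2 with heq | hβ2
      · intro h
        have hmem : wM ∈ {w : Δ | u w = β} := heq.symm
        have : ((v wM : ℝ) : EReal) ≤ fOpt u v β := le_sSup ⟨wM, hmem, rfl⟩
        rw [h, le_bot_iff] at this
        exact EReal.coe_ne_bot _ this
      · set t := (M - β) / (M - m) with htdef
        have ht : t ∈ Set.Ioo (0:ℝ) 1 := by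
          constructor
          · apply div_pos (by linarith) (by linarith)
          · rw [div_lt_one (by linarith)]; linarith
        have hne : M - m ≠ 0 := by linarith
        have h1t : 1 - t = (β - m) / (M - m) := by
          rw [htdef]
          field_simp
          ring
        have hcomb : t * m + (1 - t) * M = β := by
          rw [h1t, htdef, div_mul_eq_mul_div, div_mul_eq_mul_div, ← add_div,
            div_eq_iff hne]
          ring
        have H := hconc m M t ht
        rw [hcomb] at H
        intro h
        rw [h, le_bot_iff] at H
        have hma : ((v wm : ℝ) : EReal) ≤ fOpt u v m := le_sSup ⟨wm, rfl, rfl⟩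
        have hMa : ((v wM : ℝ) : EReal) ≤ fOpt u v M := le_sSup ⟨wM, rfl, rfl⟩
        have hle : ((t * v wm + (1 - t) * v wM : ℝ) : EReal)
            ≤ ((t : ℝ) : EReal) * fOpt u v m + ((1 - t : ℝ) : EReal) * fOpt u v M := by
          rw [EReal.coe_add, EReal.coe_mul, EReal.coe_mul]
          gcongr
          · exact EReal.coe_nonneg.2 (by linarith [ht.2])
        rw [H, le_bot_iff] at hle
        exact EReal.coe_ne_bot _ hle
    lift fOpt u v β to ℝ using ⟨htop, hbot⟩ with r
    exact ⟨r, rfl⟩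
  set F : ℝ → ℝ := fun β => (fOpt u v β).toReal with hFdef
  have hF : ∀ β ∈ Icc m M, fOpt u v β = ((F β : ℝ) : EReal) := by
    intro β hβ
    obtain ⟨r, hr⟩ := hreal β hβ
    rw [hr]
    simp [hFdef, hr]
  -- real concavity on [m, M]
  have hIccconv : ∀ a ∈ Icc m M, ∀ b ∈ Icc m M, ∀ t ∈ Set.Ioo (0:ℝ) 1,
      t * a + (1 - t) * b ∈ Icc m M := by
    intro a ha b hb t ht
    constructor
    · nlinarith [ha.1, hb.1, ht.1, ht.2]
    · nlinarith [ha.2, hb.2, ht.1, ht.2]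
  have hFconc : ∀ a ∈ Icc m M, ∀ b ∈ Icc m M, ∀ t ∈ Set.Ioo (0:ℝ) 1,
      t * F a + (1 - t) * F b ≤ F (t * a + (1 - t) * b) := by
    intro a ha b hb t ht
    have H := hconc a b t ht
    rw [hF a ha, hF b hb, hF _ (hIccconv a ha b hb t ht)] at H
    rw [← EReal.coe_mul, ← EReal.coe_mul, ← EReal.coe_add] at H
    exact EReal.coe_le_coe_iff.1 H
  have hαmem : α ∈ Icc m M := ⟨h1.le, h2.le⟩
  -- three point inequality
  have h3pt : ∀ a ∈ Icc m M, ∀ b ∈ Icc m M, a < α → α < b →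
      (F b - F α) * (α - a) ≤ (F α - F a) * (b - α) := by
    intro a ha b hb haα hαb
    have hba : 0 < b - a := by linarith
    set t := (b - α) / (b - a) with htdef
    have ht : t ∈ Set.Ioo (0:ℝ) 1 := by
      constructor
      · exact div_pos (by linarith) hba
      · rw [div_lt_one hba]; linarith
    have hcomb : t * a + (1 - t) * b = α := by
      rw [htdef]; field_simp; ring
    have H := hFconc a ha b hb t ht
    rw [hcomb] at H
    have ht1 : t * (b - a) = b - α := div_mul_cancel₀ _ hba.ne'
    have ht2 : (1 - t) * (b - a) = α - a := by
      have : (1:ℝ) * (b - a) = b - a := one_mul _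
      nlinarith [ht1]
    have key : (b - α) * F a + (α - a) * F b ≤ F α * (b - a) := by
      calc (b - α) * F a + (α - a) * F b = (t * F a + (1 - t) * F b) * (b - a) := by
            rw [← ht1, ← ht2]; ring
      _ ≤ F α * (b - a) := mul_le_mul_of_nonneg_right H hba.le
    linarith [key]
  -- the supporting slope
  set R : Set ℝ := (fun b => (F b - F α) / (b - α)) '' (Ioc α M) with hRdef
  have hRne : R.Nonempty := ⟨_, ⟨M, ⟨h2, le_refl M⟩, rfl⟩⟩
  have hIocIcc : Ioc α M ⊆ Icc m M := fun b hb => ⟨by linarith [hb.1], hb.2⟩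
  have hRbdd : BddAbove R := by
    refine ⟨(F α - F m) / (α - m), ?_⟩
    rintro s ⟨b, hb, rfl⟩
    rw [div_le_div_iff₀ (by linarith [hb.1]) (by linarith)]
    have := h3pt m ⟨le_refl m, hmM.le⟩ b (hIocIcc hb) h1 hb.1
    nlinarith
  set q := sSup R with hqdef
  have hsup : ∀ β ∈ Icc m M, F β ≤ F α + q * (β - α) := by
    intro β hβ
    rcases lt_trichotomy β α with hβα | rfl | hβα
    · -- β < α : q ≤ (F α - F β)/(α - β)
      have hub : q ≤ (F α - F β) / (α - β) := by
        refine csSup_le hRne ?_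
        rintro s ⟨b, hb, rfl⟩
        rw [div_le_div_iff₀ (by linarith [hb.1]) (by linarith)]
        have := h3pt β hβ b (hIocIcc hb) hβα hb.1
        nlinarith
      have := mul_le_mul_of_nonneg_right hub (by linarith : (0:ℝ) ≤ α - β)
      rw [div_mul_cancel₀ _ (by linarith : α - β ≠ 0)] at this
      nlinarith
    · simp
    · -- α < β
      have hlb : (F β - F α) / (β - α) ≤ q := le_csSup hRbdd ⟨β, ⟨hβα, hβ.2⟩, rfl⟩
      have := mul_le_mul_of_nonneg_right hlb (by linarith : (0:ℝ) ≤ β - α)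
      rw [div_mul_cancel₀ _ (by linarith : β - α ≠ 0)] at this
      nlinarith
  -- conclusion
  rw [hF α hαmem]
  refine le_antisymm ?_ ?_
  · have := part_a hu hv α
    rwa [hF α hαmem] at this
  · refine le_trans (iInf_le _ q) ?_
    rw [EReal.coe_le_coe_iff]
    have hτ : q * α - F α ≤ tauOpt u v q := by
      refine le_csInf (range_nonempty _) ?_
      rintro r ⟨w, rfl⟩
      have hw1 : ((v w : ℝ) : EReal) ≤ fOpt u v (u w) := le_sSup ⟨w, rfl, rfl⟩
      have hwmem : u w ∈ Icc m M := ⟨hm w, hM w⟩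
      rw [hF _ hwmem, EReal.coe_le_coe_iff] at hw1
      have := hsup (u w) hwmem
      simp only
      nlinarith
    linarith

/-- (a) `f ≤ τ*`; (b) if `τ` is supported at `(q,α)` then
`f(α) = qα − τ(q) = τ*(α)`; (c) the following are equivalent:
(i) `τ` is supported at `(q,α)` for every `q` and every `α ∈ ∂τ(q)`;
(ii) `f = τ*`; (iii) `f` is concave. -/
theorem stmt_11 {Δ : Type*} [TopologicalSpace Δ] [CompactSpace Δ] [T2Space Δ] [Nonempty Δ]
    (u v : Δ → ℝ) (hu : Continuous u) (hv : UpperSemicontinuous v) :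
    (∀ α : ℝ, fOpt u v α ≤ concConj (tauOpt u v) α) ∧
    (∀ q α : ℝ, SupportedAt u v q α →
      fOpt u v α = ((q * α - tauOpt u v q : ℝ) : EReal) ∧
      fOpt u v α = concConj (tauOpt u v) α) ∧
    (((∀ q α : ℝ, InSubdiff (tauOpt u v) q α → SupportedAt u v q α) ↔
        (∀ α : ℝ, fOpt u v α = concConj (tauOpt u v) α)) ∧
      ((∀ α : ℝ, fOpt u v α = concConj (tauOpt u v) α) ↔
        (∀ a b t : ℝ, t ∈ Set.Ioo (0:ℝ) 1 →
          ((t : ℝ) : EReal) * fOpt u v a + ((1 - t : ℝ) : EReal) * fOpt u v b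
            ≤ fOpt u v (t * a + (1 - t) * b)))) := by
  obtain ⟨wm, _, hm'⟩ := lsc_exists_min isCompact_univ univ_nonempty hu.lowerSemicontinuous
  obtain ⟨wM, _, hM'⟩ := usc_exists_max isCompact_univ univ_nonempty hu.upperSemicontinuous
  have hm : ∀ x, u wm ≤ u x := fun x => hm' x (mem_univ x)
  have hM : ∀ x, u x ≤ u wM := fun x => hM' x (mem_univ x)
  refine ⟨part_a hu hv, fun q α h => part_b hu hv h, ?_, ?_⟩
  · constructor
    · intro hi α
      rcases le_or_gt α (u wm) with hα | h1
      · exact not_interior_eq hu hv hm hM (Or.inl hα)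
      rcases le_or_gt (u wM) α with hα | h2
      · exact not_interior_eq hu hv hm hM (Or.inr hα)
      obtain ⟨q, hq⟩ := exists_subdiff hu hv hm hM h1 h2
      exact (part_b hu hv (hi q α hq)).2
    · intro hf q α hq
      exact subdiff_supported hu hv hf q α hq
  · constructor
    · intro hf a b t ht
      rw [hf a, hf b, hf (t * a + (1 - t) * b)]
      exact concConj_concave a b t ht
    · intro hconc α
      rcases le_or_gt α (u wm) with hα | h1
      · exact not_interior_eq hu hv hm hM (Or.inl hα)
      rcases le_or_gt (u wM) α with hα | h2
      · exact not_interior_eq hu hv hm hM (Or.inr hα)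
      exact concave_interior_eq hu hv hm hM hconc h1 h2
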